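/- Let t ≥ 2 and let G_{A,B} be a K_{t,t}-free bipartite graph with |A| = m and |B| = n. Let ε ∈ (0,1) and let N be a family of s t-element subsets of A such that for every b ∈ B with deg(b) ≥ εm there exists T ∈ N with T ⊆ N(b). Then |E(G)| ≤ n·⌊εm⌋ + s·(t−1)·m. -/

import Mathlib

open scoped Classical
open Finset

theorem stmt_1 {α β : Type*} [DecidableEq α] [DecidableEq β]
    (t m n s : ℕ) (ht : 2 ≤ t)
    (A : Finset α) (B : Finset β) (E : Finset (α × β))
    (hE : E ⊆ A ×ˢ B) (hm : A.card = m) (hn : B.card = n)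
    (hfree : ¬ ∃ (S : Finset α) (T : Finset β), S ⊆ A ∧ T ⊆ B ∧
      S.card = t ∧ T.card = t ∧ ∀ a ∈ S, ∀ b ∈ T, (a, b) ∈ E)
    (ε : ℝ) (hε0 : 0 < ε) (hε1 : ε < 1)
    (N : Finset (Finset α)) (hs : N.card = s)
    (hNsub : ∀ T ∈ N, T ⊆ A ∧ T.card = t)
    (hnet : ∀ b ∈ B, ε * m ≤ ((A.filter fun a => (a, b) ∈ E).card : ℝ) →
      ∃ T ∈ N, T ⊆ A.filter fun a => (a, b) ∈ E) :
    E.card ≤ n * ⌊ε * (m : ℝ)⌋₊ + s * (t - 1) * m := by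
  classical
  set deg : β → ℕ := fun b => (A.filter fun a => (a, b) ∈ E).card with hdeg
  have hsum : E.card = ∑ b ∈ B, deg b := by
    rw [Finset.card_eq_sum_card_fiberwise
      (f := fun e => e.2) (fun e he => (Finset.mem_product.mp (hE he)).2)]
    refine Finset.sum_congr rfl fun b hb => ?_
    apply Finset.card_bij (fun e _ => e.1)
    · rintro ⟨x, y⟩ he
      simp only [Finset.mem_filter] at he ⊢
      obtain ⟨h1, h2⟩ := he
      subst h2
      exact ⟨(Finset.mem_product.mp (hE h1)).1, h1⟩
    · intro e1 h1 e2 h2 h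
      simp only [Finset.mem_filter] at h1 h2
      exact Prod.ext h (h1.2.trans h2.2.symm)
    · intro a ha
      simp only [Finset.mem_filter] at ha
      exact ⟨(a, b), Finset.mem_filter.mpr ⟨ha.2, rfl⟩, rfl⟩
  set Bhi := B.filter (fun b => ε * m ≤ (deg b : ℝ)) with hBhi
  set Blo := B.filter (fun b => ¬ ε * m ≤ (deg b : ℝ)) with hBlo
  have hsplit : ∑ b ∈ B, deg b = ∑ b ∈ Bhi, deg b + ∑ b ∈ Blo, deg b :=
    (Finset.sum_filter_add_sum_filter_not B _ _).symm
  -- low part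
  have hlo : ∑ b ∈ Blo, deg b ≤ n * ⌊ε * (m : ℝ)⌋₊ := by
    calc ∑ b ∈ Blo, deg b ≤ Blo.card * ⌊ε * (m : ℝ)⌋₊ := by
          rw [← smul_eq_mul]
          apply Finset.sum_le_card_nsmul
          intro b hb
          rw [hBlo, Finset.mem_filter] at hb
          exact Nat.le_floor (le_of_lt (lt_of_not_ge hb.2))
      _ ≤ n * ⌊ε * (m : ℝ)⌋₊ := by
          apply Nat.mul_le_mul_right
          rw [← hn]; exact Finset.card_filter_le _ _
  -- choice of net element for high-degree vertices
  have hchoice : ∀ b ∈ Bhi, ∃ T ∈ N, T ⊆ A.filter fun a => (a, b) ∈ E := by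
    intro b hb
    rw [hBhi, Finset.mem_filter] at hb
    exact hnet b hb.1 hb.2
  choose! g hgN hgsub using hchoice
  have hcard_hi : Bhi.card ≤ s * (t - 1) := by
    rw [Finset.card_eq_sum_card_fiberwise (f := g) (fun b hb => hgN b hb)]
    calc ∑ T ∈ N, (Bhi.filter fun b => g b = T).card
        ≤ N.card * (t - 1) := by
          rw [← smul_eq_mul]
          apply Finset.sum_le_card_nsmul
          intro T hT
          by_contra hlt
          push_neg at hlt
          have htle : t ≤ (Bhi.filter fun b => g b = T).card := by omega
          obtain ⟨T', hT'sub, hT'card⟩ := Finset.exists_subset_card_eq htle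
          apply hfree
          refine ⟨T, T', (hNsub T hT).1, ?_, (hNsub T hT).2, hT'card, ?_⟩
          · intro b hb
            have := hT'sub hb
            rw [Finset.mem_filter] at this
            have := this.1
            rw [hBhi, Finset.mem_filter] at this
            exact this.1
          · intro a ha b hb
            have hb' := hT'sub hb
            rw [Finset.mem_filter] at hb'
            have hsub := hgsub b hb'.1
            rw [hb'.2] at hsub
            have := hsub ha
            rw [Finset.mem_filter] at this
            exact this.2
      _ = s * (t - 1) := by rw [hs]
  have hhi : ∑ b ∈ Bhi, deg b ≤ s * (t - 1) * m := by
    calc ∑ b ∈ Bhi, deg b ≤ Bhi.card * m := by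
          rw [← smul_eq_mul]
          apply Finset.sum_le_card_nsmul
          intro b hb
          rw [← hm]
          exact Finset.card_filter_le _ _
      _ ≤ s * (t - 1) * m := Nat.mul_le_mul_right _ hcard_hi
  rw [hsum, hsplit]
  omega
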